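/- Let F be a homogeneous form of degree d over ℂ that is divisible by a linear form. Then either F is not a direct sum, or there exist linearly independent linear forms x and y such that F = x^d − y^d. -/

import Mathlib

/-!
Apolarity setup.  `S = ℂ[x_1,…,x_n]` and its dual ring `T = ℂ[α_1,…,α_n]` are both
realized as `MvPolynomial (Fin n) ℂ`; the apolarity action `Θ ⌟ F` (`contract Θ F`)
lets `α_i` act as the partial differentiation operator `∂/∂x_i`.
-/

open MvPolynomial

noncomputable section Apolarity

/-- Partial derivatives on `ℂ[x_1,…,x_n]` commute. -/
lemma pderiv_pderiv_comm (n : ℕ) (i j : Fin n) (f : MvPolynomial (Fin n) ℂ) :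
    pderiv i (pderiv j f) = pderiv j (pderiv i f) := by
  induction f using MvPolynomial.induction_on with
  | C a => simp
  | add p q hp hq => simp [hp, hq]
  | mul_X p k hp =>
    rcases eq_or_ne i k with rfl | hik
    · rcases eq_or_ne j i with rfl | hjk
      · rfl
      · simp only [pderiv_mul, pderiv_X_self, pderiv_X_of_ne hjk, pderiv_X_of_ne hjk.symm,
          map_add, map_zero, map_one, Derivation.map_one_eq_zero, mul_one, mul_zero,
          add_zero, zero_add, hp]
    · rcases eq_or_ne j k with rfl | hjk
      · simp only [pderiv_mul, pderiv_X_self, pderiv_X_of_ne hik, pderiv_X_of_ne hik.symm,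
          map_add, map_zero, map_one, Derivation.map_one_eq_zero, mul_one, mul_zero,
          add_zero, zero_add, hp]
      · simp only [pderiv_mul, pderiv_X_of_ne hik.symm, pderiv_X_of_ne hjk.symm, map_add,
          map_zero, mul_zero, add_zero, zero_add, hp]

variable (n : ℕ)

/-- The endomorphism `∂/∂x_i` of `S = ℂ[x_1,…,x_n]`. -/
def derOp (i : Fin n) : Module.End ℂ (MvPolynomial (Fin n) ℂ) :=
  (pderiv i).toLinearMap

lemma derOp_commute (i j : Fin n) : Commute (derOp n i) (derOp n j) :=
  LinearMap.ext fun f => pderiv_pderiv_comm n i j f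

/-- The commuting product of the operators `(∂/∂x_i)^(m i)`. -/
def piDiffHom : (Fin n → Multiplicative ℕ) →* Module.End ℂ (MvPolynomial (Fin n) ℂ) :=
  MonoidHom.noncommPiCoprod (fun i : Fin n => powersHom _ (derOp n i))
    (fun i j _ x y => ((derOp_commute n i j).pow_pow x y))

/-- The differential operator `∏ i, (∂/∂x_i)^(m i)` attached to an exponent vector `m`. -/
def diffMonoidHom : Multiplicative (Fin n →₀ ℕ) →* Module.End ℂ (MvPolynomial (Fin n) ℂ) :=
  (piDiffHom n).comp
    (AddMonoidHom.toMultiplicative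
      (Finsupp.coeFnAddHom : (Fin n →₀ ℕ) →+ (Fin n → ℕ)))

/-- The apolarity action of the dual ring `T = ℂ[α_1,…,α_n]` on `S = ℂ[x_1,…,x_n]`, as an
algebra homomorphism to differential operators: `α_i` acts as `∂/∂x_i`. -/
def apolarAlgHom :
    MvPolynomial (Fin n) ℂ →ₐ[ℂ] Module.End ℂ (MvPolynomial (Fin n) ℂ) :=
  AddMonoidAlgebra.lift ℂ _ (Fin n →₀ ℕ) (diffMonoidHom n)

variable {n}

/-- The apolarity action `Θ ⌟ F`: apply to `F` the differential operator obtained from `Θ`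
by substituting `∂/∂x_i` for the `i`-th (dual) variable. -/
def contract (Θ F : MvPolynomial (Fin n) ℂ) : MvPolynomial (Fin n) ℂ :=
  apolarAlgHom n Θ F

lemma apolarAlgHom_X (i : Fin n) : apolarAlgHom n (X i) = derOp n i := by
  classical
  have hX : (X i : MvPolynomial (Fin n) ℂ)
      = AddMonoidAlgebra.single (Finsupp.single i 1) (1 : ℂ) := rfl
  rw [hX]
  rw [show apolarAlgHom n (AddMonoidAlgebra.single (Finsupp.single i 1) (1:ℂ))
      = (1:ℂ) • diffMonoidHom n (Multiplicative.ofAdd (Finsupp.single i 1)) from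
    AddMonoidAlgebra.lift_single _ _ _]
  rw [one_smul]
  change piDiffHom n ((AddMonoidHom.toMultiplicative
      (Finsupp.coeFnAddHom : (Fin n →₀ ℕ) →+ (Fin n → ℕ)))
      (Multiplicative.ofAdd (Finsupp.single i 1))) = derOp n i
  have harg : (AddMonoidHom.toMultiplicative
        (Finsupp.coeFnAddHom : (Fin n →₀ ℕ) →+ (Fin n → ℕ)))
        (Multiplicative.ofAdd (Finsupp.single i 1))
      = Pi.mulSingle (M := fun _ : Fin n => Multiplicative ℕ) i (Multiplicative.ofAdd 1) := by
    funext j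
    rcases eq_or_ne j i with rfl | hj
    · show Multiplicative.ofAdd ((Finsupp.single j 1 : Fin n →₀ ℕ) j)
        = Pi.mulSingle (M := fun _ : Fin n => Multiplicative ℕ) j (Multiplicative.ofAdd 1) j
      rw [Finsupp.single_eq_same, Pi.mulSingle_eq_same]
    · show Multiplicative.ofAdd ((Finsupp.single i 1 : Fin n →₀ ℕ) j)
        = Pi.mulSingle (M := fun _ : Fin n => Multiplicative ℕ) i (Multiplicative.ofAdd 1) j
      rw [Finsupp.single_eq_of_ne hj, Pi.mulSingle_eq_of_ne hj]
      exact ofAdd_zero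
  refine (congrArg (piDiffHom n) harg).trans ?_
  refine (MonoidHom.noncommPiCoprod_mulSingle
    (ϕ := fun i : Fin n => powersHom _ (derOp n i))
    (hcomm := fun i j _ x y => ((derOp_commute n i j).pow_pow x y))
    i (Multiplicative.ofAdd 1)).trans ?_
  rfl

/-- Sanity check: the dual variable `α_i` acts on `F` as `∂F/∂x_i`. -/
@[simp] lemma contract_X (i : Fin n) (F : MvPolynomial (Fin n) ℂ) :
    contract (X i) F = pderiv i F := by
  rw [contract, apolarAlgHom_X]; rfl

/-- The apolar (annihilator) ideal `F^⊥ = {Θ ∈ T : Θ ⌟ F = 0}` of a polynomial `F`. -/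
def apolarIdeal (F : MvPolynomial (Fin n) ℂ) : Ideal (MvPolynomial (Fin n) ℂ) where
  carrier := {Θ | contract Θ F = 0}
  zero_mem' := by simp [contract]
  add_mem' := by
    intro a b ha hb
    simp only [Set.mem_setOf_eq, contract, map_add, LinearMap.add_apply] at *
    rw [ha, hb, add_zero]
  smul_mem' := by
    intro c x hx
    simp only [Set.mem_setOf_eq, smul_eq_mul, contract, map_mul, Module.End.mul_apply] at *
    rw [hx, map_zero]

@[simp] lemma mem_apolarIdeal {Θ F : MvPolynomial (Fin n) ℂ} :
    Θ ∈ apolarIdeal F ↔ contract Θ F = 0 := Iff.rfl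

variable (n)

/-- The irrelevant maximal ideal `m = ⟨α_1,…,α_n⟩` of `T`. -/
def irrIdeal : Ideal (MvPolynomial (Fin n) ℂ) :=
  Ideal.span (Set.range X)

variable {n}

/-- The homogeneous ideal `I` has a minimal generator of degree `k`, i.e. `(I/mI)_k ≠ 0`:
there is a homogeneous element of `I` of degree `k` not belonging to `m * I`. -/
def HasMinGenOfDegree (I : Ideal (MvPolynomial (Fin n) ℂ)) (k : ℕ) : Prop :=
  ∃ Θ, Θ ∈ I ∧ Θ.IsHomogeneous k ∧ Θ ∉ irrIdeal n * I

/-- The homogeneous ideal `I` has at least `r` minimal generators of degree `k`, i.e.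
`dim_ℂ (I/mI)_k ≥ r`: there are `r` homogeneous degree-`k` elements of `I` that are
linearly independent modulo `m * I`. -/
def MinGensAtLeast (I : Ideal (MvPolynomial (Fin n) ℂ)) (k r : ℕ) : Prop :=
  ∃ Θ : Fin r → MvPolynomial (Fin n) ℂ,
    (∀ i, Θ i ∈ I ∧ (Θ i).IsHomogeneous k) ∧
    ∀ c : Fin r → ℂ, (∑ i, c i • Θ i) ∈ irrIdeal n * I → ∀ i, c i = 0

/-- `F` is an `s`-fold direct sum of degree `d`: `F = F_1 + ⋯ + F_s` where the `F_i` are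
nonzero degree-`d` forms in independent subspaces `V_i` of the space of linear forms with
`V = V_1 ⊕ ⋯ ⊕ V_s` (i.e. in disjoint sets of variables, up to linear change of variables;
`F_i ∈ S^d V_i` is expressed as membership in the subalgebra generated by `V_i`). -/
def IsSFoldDirectSum (F : MvPolynomial (Fin n) ℂ) (d s : ℕ) : Prop :=
  ∃ (V : Fin s → Submodule ℂ (MvPolynomial (Fin n) ℂ))
    (G : Fin s → MvPolynomial (Fin n) ℂ),
    (∀ i, V i ≤ homogeneousSubmodule (Fin n) ℂ 1) ∧
    iSupIndep V ∧
    (⨆ i, V i) = homogeneousSubmodule (Fin n) ℂ 1 ∧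
    (∀ i, G i ≠ 0 ∧ (G i).IsHomogeneous d ∧ G i ∈ Algebra.adjoin ℂ (V i : Set _)) ∧
    F = ∑ i, G i

/-- `F` is a direct sum: `F = F₁ + F₂` with `F₁ ∈ S^d V₁`, `F₂ ∈ S^d V₂` nonzero and
`V = V₁ ⊕ V₂`. -/
def IsDirectSum (F : MvPolynomial (Fin n) ℂ) (d : ℕ) : Prop :=
  IsSFoldDirectSum F d 2

/-- `F` is a limit (as `t → 0`) of `s`-fold direct sums of degree `d`. -/
def IsLimitOfSFoldDirectSums (F : MvPolynomial (Fin n) ℂ) (d s : ℕ) : Prop :=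
  ∃ G : ℂ → MvPolynomial (Fin n) ℂ,
    (∀ t : ℂ, t ≠ 0 → IsSFoldDirectSum (G t) d s) ∧
    ∀ m : Fin n →₀ ℕ,
      Filter.Tendsto (fun t => MvPolynomial.coeff m (G t))
        (nhdsWithin (0 : ℂ) {(0 : ℂ)}ᶜ) (nhds (MvPolynomial.coeff m F))

/-- `F` is a limit of direct sums. -/
def IsLimitOfDirectSums (F : MvPolynomial (Fin n) ℂ) (d : ℕ) : Prop :=
  IsLimitOfSFoldDirectSums F d 2

/-- `F` is concise: `(F^⊥)_1 = 0`, i.e. `F` cannot be written using fewer variables. -/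
def Concise (F : MvPolynomial (Fin n) ℂ) : Prop :=
  ∀ Θ : MvPolynomial (Fin n) ℂ, Θ.IsHomogeneous 1 → contract Θ F = 0 → Θ = 0

end Apolarity


noncomputable section Aux

lemma aux_single_of_degree_one {n : ℕ} (m : Fin n →₀ ℕ) (h : Finsupp.degree m = 1) :
    ∃ i, m = Finsupp.single i 1 := by
  have hm0 : m ≠ 0 := by rintro rfl; simp [map_zero] at h
  obtain ⟨i, hi⟩ := Finsupp.support_nonempty_iff.mpr hm0
  have hile : m i ≤ 1 := h ▸ Finsupp.le_degree i m
  have hige : 1 ≤ m i := Nat.one_le_iff_ne_zero.mpr (Finsupp.mem_support_iff.mp hi)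
  have hmi : m i = 1 := le_antisymm hile hige
  refine ⟨i, Finsupp.ext fun j => ?_⟩
  rcases eq_or_ne j i with rfl | hji
  · simp [hmi]
  · have hsum : Finsupp.degree m = m i + ∑ k ∈ m.support.erase i, m k := by
      rw [Finsupp.degree_apply, Finset.add_sum_erase _ _ hi]
    have : ∑ k ∈ m.support.erase i, m k = 0 := by omega
    have hj : m j = 0 := by
      by_contra hj
      have hjs : j ∈ m.support.erase i := Finset.mem_erase.mpr ⟨hji, Finsupp.mem_support_iff.mpr hj⟩
      exact hj (Finset.sum_eq_zero_iff.mp this j hjs)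
    simp [hj, Finsupp.single_eq_of_ne hji]

lemma aux_homog_one_mem_span {n : ℕ} {p : MvPolynomial (Fin n) ℂ} (hp : p.IsHomogeneous 1) :
    p ∈ Submodule.span ℂ (Set.range (X : Fin n → MvPolynomial (Fin n) ℂ)) := by
  rw [p.as_sum]
  refine Submodule.sum_mem _ fun m hm => ?_
  have hdeg : Finsupp.degree m = 1 := by
    have := hp (MvPolynomial.mem_support_iff.mp hm)
    rwa [Finsupp.degree_eq_weight_one]
  obtain ⟨i, rfl⟩ := aux_single_of_degree_one m hdeg
  have : monomial (Finsupp.single i 1) (coeff (Finsupp.single i 1) p)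
      = (coeff (Finsupp.single i 1) p) • X i := by
    rw [smul_eq_C_mul, X, C_mul_monomial, mul_one]
  rw [this]
  exact Submodule.smul_mem _ _ (Submodule.subset_span ⟨i, rfl⟩)

def auxEv {n : ℕ} (ν : MvPolynomial (Fin n) ℂ →ₗ[ℂ] ℂ) : MvPolynomial (Fin n) ℂ →ₐ[ℂ] ℂ :=
  aeval fun i => ν (X i)

lemma aux_aeval_eq_eval {n : ℕ} (q : Fin n → ℂ) (p : MvPolynomial (Fin n) ℂ) :
    aeval q p = eval q p := by
  exact RingHom.congr_fun (coe_aeval_eq_eval (f := q)) p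

end Aux

noncomputable section Aux2
open MvPolynomial

lemma auxEv_homog1 {n : ℕ} (ν : MvPolynomial (Fin n) ℂ →ₗ[ℂ] ℂ) {p : MvPolynomial (Fin n) ℂ}
    (hp : p.IsHomogeneous 1) : auxEv ν p = ν p := by
  have hsp := aux_homog_one_mem_span hp
  clear hp
  induction hsp using Submodule.span_induction with
  | mem x hx => obtain ⟨i, rfl⟩ := hx; simp [auxEv]
  | zero => simp
  | add x y _ _ hx hy => simp [map_add, hx, hy]
  | smul c x _ hx => simp [map_smul, hx]

lemma auxEv_eval {n : ℕ} (ν : MvPolynomial (Fin n) ℂ →ₗ[ℂ] ℂ) (p : MvPolynomial (Fin n) ℂ) :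
    auxEv ν p = eval (fun i => ν (X i)) p :=
  aux_aeval_eq_eval _ p

lemma auxEv_congr {n : ℕ} {V : Submodule ℂ (MvPolynomial (Fin n) ℂ)}
    (hV : V ≤ homogeneousSubmodule (Fin n) ℂ 1)
    {ν ν' : MvPolynomial (Fin n) ℂ →ₗ[ℂ] ℂ} (h : ∀ v ∈ V, ν v = ν' v)
    {G : MvPolynomial (Fin n) ℂ} (hG : G ∈ Algebra.adjoin ℂ (V : Set (MvPolynomial (Fin n) ℂ))) :
    auxEv ν G = auxEv ν' G := by
  have hle : Algebra.adjoin ℂ (V : Set (MvPolynomial (Fin n) ℂ))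
      ≤ AlgHom.equalizer (auxEv ν) (auxEv ν') := by
    apply Algebra.adjoin_le
    intro v hv
    have h1 : MvPolynomial.IsHomogeneous v 1 := (mem_homogeneousSubmodule _ _).1 (hV hv)
    show auxEv ν v = auxEv ν' v
    rw [auxEv_homog1 _ h1, auxEv_homog1 _ h1]
    exact h v hv
  exact hle hG

lemma aux_eval_smul {n d : ℕ} {p : MvPolynomial (Fin n) ℂ} (hp : p.IsHomogeneous d)
    (α : ℂ) (q : Fin n → ℂ) : eval (α • q) p = α ^ d * eval q p := by
  conv_lhs => rw [p.as_sum]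
  conv_rhs => rw [p.as_sum]
  rw [map_sum, map_sum, Finset.mul_sum]
  refine Finset.sum_congr rfl fun m hm => ?_
  have hdeg : Finsupp.degree m = d := by
    have := hp (MvPolynomial.mem_support_iff.mp hm)
    rwa [Finsupp.degree_eq_weight_one]
  rw [eval_monomial, eval_monomial]
  have : (m.prod fun i e => (α • q) i ^ e) = α ^ d * m.prod fun i e => q i ^ e := by
    rw [Finsupp.prod, Finsupp.prod]
    have : ∀ i ∈ m.support, (α • q) i ^ m i = α ^ m i * q i ^ m i := by
      intro i _; rw [Pi.smul_apply, smul_eq_mul, mul_pow]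
    rw [Finset.prod_congr rfl this, Finset.prod_mul_distrib, Finset.prod_pow_eq_pow_sum]
    rw [← hdeg, Finsupp.degree_apply]
  rw [this]; ring

lemma aux_exists_proj {M : Type*} [AddCommGroup M] [Module ℂ M] (V1 V2 : Submodule ℂ M)
    (h : Disjoint V1 V2) : ∃ π : M →ₗ[ℂ] M, (∀ v ∈ V1, π v = v) ∧ (∀ v ∈ V2, π v = 0) := by
  obtain ⟨C, hC⟩ := Submodule.exists_isCompl (V1 ⊔ V2)
  have hcompl : IsCompl V1 (V2 ⊔ C) := by
    constructor
    · rw [Submodule.disjoint_def]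
      intro x hx1 hx2
      obtain ⟨y, hy, z, hz, hyz⟩ := Submodule.mem_sup.1 hx2
      have hzmem : z ∈ V1 ⊔ V2 := by
        have : z = x - y := by rw [← hyz]; abel
        rw [this]
        exact Submodule.sub_mem _ (Submodule.mem_sup_left hx1) (Submodule.mem_sup_right hy)
      have hz0 : z = 0 := by
        have := hC.disjoint.symm
        rw [Submodule.disjoint_def] at this
        exact this z hz hzmem
      have hxy : x = y := by rw [← hyz, hz0, add_zero]
      rw [Submodule.disjoint_def] at h
      exact h x hx1 (hxy ▸ hy)
    · rw [codisjoint_iff, ← sup_assoc, codisjoint_iff.mp hC.codisjoint]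
  refine ⟨V1.subtype ∘ₗ V1.projectionOnto _ hcompl, fun v hv => ?_, fun v hv => ?_⟩
  · simp [Submodule.projectionOnto_apply_of_mem_left hcompl hv]
  · simp [Submodule.projectionOnto_apply_of_mem_right hcompl (Submodule.mem_sup_left hv)]

lemma aux_exists_dual {M : Type*} [AddCommGroup M] [Module ℂ M] {b : M} (hb : b ≠ 0) :
    ∃ μ : M →ₗ[ℂ] ℂ, μ b = 1 := by
  obtain ⟨g, hg⟩ := (LinearMap.toSpanSingleton ℂ M b).exists_leftInverse_of_injective
    (LinearMap.ker_toSpanSingleton ℂ hb)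
  refine ⟨g, ?_⟩
  have := LinearMap.congr_fun hg 1
  simpa using this

end Aux2

noncomputable section Aux3
open MvPolynomial

lemma aux_ev_zero {n d : ℕ} {V : Submodule ℂ (MvPolynomial (Fin n) ℂ)}
    (hV : V ≤ homogeneousSubmodule (Fin n) ℂ 1) {G : MvPolynomial (Fin n) ℂ}
    (hGh : G.IsHomogeneous d) (hGadj : G ∈ Algebra.adjoin ℂ (V : Set (MvPolynomial (Fin n) ℂ)))
    (hd : d ≠ 0) {ν : MvPolynomial (Fin n) ℂ →ₗ[ℂ] ℂ} (hν : ∀ v ∈ V, ν v = 0) :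
    auxEv ν G = 0 := by
  have h1 : auxEv ν G = auxEv (0 : MvPolynomial (Fin n) ℂ →ₗ[ℂ] ℂ) G :=
    auxEv_congr hV (fun v hv => by simp [hν v hv]) hGadj
  rw [h1, auxEv_eval]
  simp only [LinearMap.zero_apply]
  rw [eval_zero', constantCoeff_eq]
  exact hGh.coeff_eq_zero (by simpa using Ne.symm hd)

lemma aux_ev_evalpt {n : ℕ} (q : Fin n → ℂ) (p : MvPolynomial (Fin n) ℂ) :
    auxEv ((aeval q : MvPolynomial (Fin n) ℂ →ₐ[ℂ] ℂ).toLinearMap) p = eval q p := by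
  rw [auxEv_eval]
  have h : (fun i => (aeval q : MvPolynomial (Fin n) ℂ →ₐ[ℂ] ℂ).toLinearMap (X i)) = q := by
    funext i; simp
  rw [h]

lemma aux_kill {n d : ℕ} (V1 V2 : Submodule ℂ (MvPolynomial (Fin n) ℂ))
    (hV1 : V1 ≤ homogeneousSubmodule (Fin n) ℂ 1) (hV2 : V2 ≤ homogeneousSubmodule (Fin n) ℂ 1)
    (hdisj : Disjoint V1 V2) (G1 G2 : MvPolynomial (Fin n) ℂ)
    (hG1h : G1.IsHomogeneous d) (hG2h : G2.IsHomogeneous d)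
    (hG1adj : G1 ∈ Algebra.adjoin ℂ (V1 : Set (MvPolynomial (Fin n) ℂ)))
    (hG2adj : G2 ∈ Algebra.adjoin ℂ (V2 : Set (MvPolynomial (Fin n) ℂ)))
    (hd : d ≠ 0) (a H : MvPolynomial (Fin n) ℂ) (ha : a ∈ V1)
    (hFeq : G1 + G2 = a * H) : G2 = 0 := by
  have haH : a.IsHomogeneous 1 := (mem_homogeneousSubmodule _ _).1 (hV1 ha)
  obtain ⟨π2, hπ22, hπ21⟩ := aux_exists_proj V2 V1 hdisj.symm
  refine MvPolynomial.funext fun q => ?_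
  set lq := (aeval q : MvPolynomial (Fin n) ℂ →ₐ[ℂ] ℂ).toLinearMap with hlq
  set ν := lq ∘ₗ π2 with hν
  have hz : auxEv ν G1 + auxEv ν G2 = 0 := by
    have := congrArg (auxEv ν) hFeq
    rw [map_add, map_mul, auxEv_homog1 ν haH] at this
    rw [this, hν, LinearMap.comp_apply, hπ21 a ha, map_zero, zero_mul]
  have h1 : auxEv ν G1 = 0 :=
    aux_ev_zero hV1 hG1h hG1adj hd (fun v hv => by
      rw [hν, LinearMap.comp_apply, hπ21 v hv, map_zero])
  have h2 : auxEv ν G2 = auxEv lq G2 :=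
    auxEv_congr hV2 (fun v hv => by rw [hν, LinearMap.comp_apply, hπ22 v hv]) hG2adj
  have := hz
  rw [h1, zero_add, h2, hlq, aux_ev_evalpt] at this
  rw [this, map_zero]

lemma aux_power {n d : ℕ} (V1 V2 : Submodule ℂ (MvPolynomial (Fin n) ℂ))
    (hV1 : V1 ≤ homogeneousSubmodule (Fin n) ℂ 1) (hV2 : V2 ≤ homogeneousSubmodule (Fin n) ℂ 1)
    (hdisj : Disjoint V1 V2) (G1 G2 : MvPolynomial (Fin n) ℂ)
    (hG1h : G1.IsHomogeneous d) (hG2h : G2.IsHomogeneous d)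
    (hG1adj : G1 ∈ Algebra.adjoin ℂ (V1 : Set (MvPolynomial (Fin n) ℂ)))
    (hG2adj : G2 ∈ Algebra.adjoin ℂ (V2 : Set (MvPolynomial (Fin n) ℂ)))
    (hd : d ≠ 0) (a b H : MvPolynomial (Fin n) ℂ) (ha : a ∈ V1) (hb : b ∈ V2)
    (hbne : b ≠ 0) (hFeq : G1 + G2 = (a + b) * H) :
    ∃ c : ℂ, G1 = C c * a ^ d := by
  have haH : a.IsHomogeneous 1 := (mem_homogeneousSubmodule _ _).1 (hV1 ha)
  have hbH : b.IsHomogeneous 1 := (mem_homogeneousSubmodule _ _).1 (hV2 hb)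
  obtain ⟨π1, hπ11, hπ12⟩ := aux_exists_proj V1 V2 hdisj
  obtain ⟨π2, hπ22, hπ21⟩ := aux_exists_proj V2 V1 hdisj.symm
  obtain ⟨μb, hμb⟩ := aux_exists_dual hbne
  set r : Fin n → ℂ := fun j => -(μb (π2 (X j))) with hr
  refine ⟨-(eval r G2), MvPolynomial.funext fun q => ?_⟩
  set lq := (aeval q : MvPolynomial (Fin n) ℂ →ₐ[ℂ] ℂ).toLinearMap with hlq
  set α : ℂ := eval q a with hα
  set ν : MvPolynomial (Fin n) ℂ →ₗ[ℂ] ℂ := lq ∘ₗ π1 + (-α) • (μb ∘ₗ π2) with hν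
  have hν1 : ∀ v ∈ V1, ν v = lq v := by
    intro v hv
    rw [hν]
    simp only [LinearMap.add_apply, LinearMap.smul_apply, LinearMap.comp_apply,
      hπ11 v hv, hπ21 v hv, map_zero, smul_eq_mul, mul_zero, add_zero]
  have hν2 : ∀ v ∈ V2, ν v = ((-α) • (μb ∘ₗ π2)) v := by
    intro v hv
    rw [hν]
    simp only [LinearMap.add_apply, LinearMap.comp_apply, hπ12 v hv, map_zero, zero_add]
  have hνa : ν a = α := by
    rw [hν1 a ha, hlq]
    simp only [AlgHom.toLinearMap_apply, aux_aeval_eq_eval, hα]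
  have hνb : ν b = -α := by
    rw [hν2 b hb]
    simp only [LinearMap.smul_apply, LinearMap.comp_apply, hπ22 b hb, hμb, smul_eq_mul, mul_one]
  -- the key identity
  have hz : auxEv ν G1 + auxEv ν G2 = 0 := by
    have := congrArg (auxEv ν) hFeq
    rw [map_add, map_mul, auxEv_homog1 ν (haH.add hbH), map_add, hνa, hνb,
      add_neg_cancel, zero_mul] at this
    exact this
  have h1 : auxEv ν G1 = eval q G1 := by
    rw [auxEv_congr hV1 hν1 hG1adj, hlq, aux_ev_evalpt]
  have h2 : auxEv ν G2 = α ^ d * eval r G2 := by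
    rw [auxEv_congr hV2 hν2 hG2adj, auxEv_eval]
    have hpt : (fun i => ((-α) • (μb ∘ₗ π2)) (X i)) = α • r := by
      funext i
      simp only [LinearMap.smul_apply, LinearMap.comp_apply, smul_eq_mul, Pi.smul_apply, hr]
      ring
    rw [hpt, aux_eval_smul hG2h]
  have : eval q G1 = -(α ^ d * eval r G2) := by
    rw [← h1, ← h2]
    exact eq_neg_of_add_eq_zero_left hz
  rw [this]
  simp only [map_mul, map_pow, map_neg, eval_C, ← hα]
  ring

end Aux3

/-- If a homogeneous form `F` of degree `d` over `ℂ` is divisible by a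
linear form, then either `F` is not a direct sum, or `F = x^d - y^d` for some linearly
independent linear forms `x`, `y`. -/
theorem linear_factor_direct_sum
    (n d : ℕ) (F : MvPolynomial (Fin n) ℂ) (hF : F.IsHomogeneous d) (hF0 : F ≠ 0)
    (hdiv : ∃ ℓ G : MvPolynomial (Fin n) ℂ, ℓ.IsHomogeneous 1 ∧ F = ℓ * G) :
    ¬ IsDirectSum F d ∨
    ∃ x y : MvPolynomial (Fin n) ℂ, x.IsHomogeneous 1 ∧ y.IsHomogeneous 1 ∧
      LinearIndependent ℂ ![x, y] ∧ F = x ^ d - y ^ d := by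
  by_cases hDS : IsDirectSum F d
  swap
  · exact Or.inl hDS
  right
  obtain ⟨ℓ, H, hℓ, hFeq⟩ := hdiv
  -- the degree is positive
  have hd : d ≠ 0 := by
    rintro rfl
    obtain ⟨m, hm⟩ := MvPolynomial.ne_zero_iff.1 hF0
    have hm0 : m = 0 :=
      (Finsupp.degree_eq_zero_iff m).1 (by rw [Finsupp.degree_eq_weight_one]; exact hF hm)
    have hc0 : coeff 0 ℓ = 0 := hℓ.coeff_eq_zero (by simp)
    have hcF : coeff 0 F = 0 := by
      have h1 : constantCoeff F = constantCoeff ℓ * constantCoeff H := by rw [hFeq, map_mul]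
      rw [constantCoeff_eq] at h1
      simp only [h1, hc0, zero_mul]
    rw [hm0] at hm
    exact hm hcF
  -- unpack the direct sum structure
  obtain ⟨Vv, Gg, hVle, hindep, hVsup, hGprop, hFsum⟩ := hDS
  have hdisj : Disjoint (Vv 0) (Vv 1) := hindep.pairwiseDisjoint (by decide : (0 : Fin 2) ≠ 1)
  have hsup01 : Vv 0 ⊔ Vv 1 = homogeneousSubmodule (Fin n) ℂ 1 := by
    rw [← hVsup]
    refine le_antisymm (sup_le (le_iSup _ 0) (le_iSup _ 1)) (iSup_le fun i => ?_)
    fin_cases i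
    · exact le_sup_left
    · exact le_sup_right
  have hF2 : F = Gg 0 + Gg 1 := by rw [hFsum, Fin.sum_univ_two]
  obtain ⟨hG0ne, hG0h, hG0adj⟩ := hGprop 0
  obtain ⟨hG1ne, hG1h, hG1adj⟩ := hGprop 1
  have hℓW : ℓ ∈ Vv 0 ⊔ Vv 1 := by
    rw [hsup01]; exact (mem_homogeneousSubmodule _ _).2 hℓ
  obtain ⟨a, ha, b, hb, hab⟩ := Submodule.mem_sup.1 hℓW
  have haH : MvPolynomial.IsHomogeneous a 1 := (mem_homogeneousSubmodule _ _).1 (hVle 0 ha)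
  have hbH : MvPolynomial.IsHomogeneous b 1 := (mem_homogeneousSubmodule _ _).1 (hVle 1 hb)
  have hkey : Gg 0 + Gg 1 = (a + b) * H := by rw [hab, ← hFeq, ← hF2]
  -- b ≠ 0
  have hbne : b ≠ 0 := by
    intro hb0
    refine hG1ne (aux_kill (Vv 0) (Vv 1) (hVle 0) (hVle 1) hdisj (Gg 0) (Gg 1)
      hG0h hG1h hG0adj hG1adj hd a H ha ?_)
    rw [hkey, hb0, add_zero]
  -- a ≠ 0
  have hane : a ≠ 0 := by
    intro ha0
    refine hG0ne (aux_kill (Vv 1) (Vv 0) (hVle 1) (hVle 0) hdisj.symm (Gg 1) (Gg 0)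
      hG1h hG0h hG1adj hG0adj hd b H hb ?_)
    rw [add_comm (Gg 1) (Gg 0), hkey, ha0, zero_add]
  -- power representations
  obtain ⟨c0, hc0⟩ := aux_power (Vv 0) (Vv 1) (hVle 0) (hVle 1) hdisj (Gg 0) (Gg 1)
    hG0h hG1h hG0adj hG1adj hd a b H ha hb hbne hkey
  obtain ⟨c1, hc1⟩ := aux_power (Vv 1) (Vv 0) (hVle 1) (hVle 0) hdisj.symm (Gg 1) (Gg 0)
    hG1h hG0h hG1adj hG0adj hd b a H hb ha hane
    (by rw [add_comm (Gg 1) (Gg 0), add_comm b a]; exact hkey)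
  have hc0ne : c0 ≠ 0 := by
    rintro rfl
    exact hG0ne (by rw [hc0, map_zero, zero_mul])
  -- the relation between the constants
  obtain ⟨π1, hπ11, hπ12⟩ := aux_exists_proj (Vv 0) (Vv 1) hdisj
  obtain ⟨π2, hπ22, hπ21⟩ := aux_exists_proj (Vv 1) (Vv 0) hdisj.symm
  obtain ⟨μa, hμa⟩ := aux_exists_dual hane
  obtain ⟨μb, hμb⟩ := aux_exists_dual hbne
  set ν0 : MvPolynomial (Fin n) ℂ →ₗ[ℂ] ℂ := μa ∘ₗ π1 - μb ∘ₗ π2 with hν0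
  have hν0a : ν0 a = 1 := by
    rw [hν0]
    simp only [LinearMap.sub_apply, LinearMap.comp_apply, hπ11 a ha, hπ21 a ha,
      map_zero, sub_zero, hμa]
  have hν0b : ν0 b = -1 := by
    rw [hν0]
    simp only [LinearMap.sub_apply, LinearMap.comp_apply, hπ12 b hb, hπ22 b hb,
      map_zero, zero_sub, hμb]
  have hrel : c0 + c1 * (-1) ^ d = 0 := by
    have hz : auxEv ν0 (Gg 0) + auxEv ν0 (Gg 1) = 0 := by
      have := congrArg (auxEv ν0) hkey
      rw [map_add, map_mul, auxEv_homog1 ν0 (haH.add hbH), map_add, hν0a, hν0b,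
        add_neg_cancel, zero_mul] at this
      exact this
    have e0 : auxEv ν0 (Gg 0) = c0 := by
      rw [hc0, map_mul, map_pow, auxEv_homog1 ν0 haH, hν0a, one_pow, mul_one]
      simp [auxEv]
    have e1 : auxEv ν0 (Gg 1) = c1 * (-1) ^ d := by
      rw [hc1, map_mul, map_pow, auxEv_homog1 ν0 hbH, hν0b]
      simp [auxEv]
    rw [e0, e1] at hz
    exact hz
  -- take a d-th root
  obtain ⟨γ, hγ⟩ := IsAlgClosed.exists_pow_nat_eq c0 (Nat.pos_of_ne_zero hd)
  have hγne : γ ≠ 0 := by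
    rintro rfl
    exact hc0ne (by rw [← hγ, zero_pow hd])
  have hneg : (-γ) ^ d = -c1 := by
    have h2 : ((-1 : ℂ)) ^ d * ((-1 : ℂ)) ^ d = 1 := by
      rw [← mul_pow]; norm_num
    have : (-γ) ^ d = (-1) ^ d * γ ^ d := by rw [← mul_pow]; ring_nf
    rw [this, hγ]
    have : c0 = -(c1 * (-1) ^ d) := by linear_combination hrel
    rw [this]
    calc (-1 : ℂ) ^ d * -(c1 * (-1) ^ d) = -(c1 * ((-1 : ℂ) ^ d * (-1) ^ d)) := by ring
    _ = -c1 := by rw [h2, mul_one]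
  refine ⟨C γ * a, C (-γ) * b, ?_, ?_, ?_, ?_⟩
  · rw [← smul_eq_C_mul]
    exact (mem_homogeneousSubmodule _ _).1
      ((homogeneousSubmodule (Fin n) ℂ 1).smul_mem γ (hVle 0 ha))
  · rw [← smul_eq_C_mul]
    exact (mem_homogeneousSubmodule _ _).1
      ((homogeneousSubmodule (Fin n) ℂ 1).smul_mem (-γ) (hVle 1 hb))
  · rw [LinearIndependent.pair_iff]
    intro s t hst
    rw [← smul_eq_C_mul, ← smul_eq_C_mul, smul_smul, smul_smul] at hst
    have h1 : (s * γ) • a = -((t * -γ) • b) := by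
      rw [← add_eq_zero_iff_eq_neg']
      linear_combination hst
    have h2 : (s * γ) • a ∈ Vv 0 := Submodule.smul_mem _ _ ha
    have h3 : (s * γ) • a ∈ Vv 1 := by
      rw [h1, ← neg_smul]
      exact Submodule.smul_mem _ _ hb
    have h4 : (s * γ) • a = 0 := by
      rw [Submodule.disjoint_def] at hdisj
      exact hdisj _ h2 h3
    have h5 : (t * -γ) • b = 0 := by
      rw [← neg_eq_zero, ← h1, h4]
    have hs : s * γ = 0 := by
      rcases smul_eq_zero.1 h4 with h | h
      · exact h
      · exact absurd h hane
    have ht : t * -γ = 0 := by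
      rcases smul_eq_zero.1 h5 with h | h
      · exact h
      · exact absurd h hbne
    constructor
    · rcases mul_eq_zero.1 hs with h | h
      · exact h
      · exact absurd h hγne
    · rcases mul_eq_zero.1 ht with h | h
      · exact h
      · exact absurd h (neg_ne_zero.2 hγne)
  · have hx : (C γ * a) ^ d = Gg 0 := by
      rw [mul_pow, ← C_pow, hγ, hc0]
    have hy : (C (-γ) * b) ^ d = - Gg 1 := by
      rw [mul_pow, ← C_pow, hneg, hc1]
      rw [map_neg, neg_mul]
    rw [hF2, hx, hy, sub_neg_eq_add]
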